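/- Let L/K be a finite purely inseparable extension of fields of odd characteristic p, let N/L be a separable algebraic extension, and let M be the maximal subfield of N separable over K. Then N = LM and N/M is purely inseparable; moreover N/L is Galois if and only if M/K is Galois, and N is pythagorean if and only if M is pythagorean. -/

import Mathlib

open Polynomial IntermediateField

private lemma isSumSq_map {R S : Type*} [CommSemiring R] [CommSemiring S] (f : R →+* S)
    {s : R} (h : IsSumSq s) : IsSumSq (f s) := by
  induction h with
  | zero => simpa using IsSumSq.zero
  | sq_add a pS ih => rw [map_add, map_mul]; exact IsSumSq.sq_add _ ih

private lemma isSumSq_pow_expChar {R : Type*} [CommSemiring R] (p : ℕ) [ExpChar R p]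
    {s : R} (hs : IsSumSq s) (k : ℕ) : IsSumSq (s ^ p ^ k) := by
  induction hs with
  | zero => rw [zero_pow (expChar_pow_pos R p k).ne']; exact IsSumSq.zero
  | sq_add a pS ih =>
      rw [add_pow_expChar_pow, mul_pow]
      exact IsSumSq.sq_add _ ih

private lemma isSquare_of_odd_pow {F : Type*} [Field F] {x y : F} {m : ℕ} (hm : Odd m)
    (h : x ^ m = y * y) : IsSquare x := by
  rcases eq_or_ne x 0 with rfl | hx
  · exact ⟨0, by simp⟩
  obtain ⟨k, hk⟩ := hm
  have hxk : x ^ k ≠ 0 := pow_ne_zero _ hx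
  refine ⟨y / x ^ k, ?_⟩
  have key : x * (x ^ k * x ^ k) = x ^ m := by rw [hk]; ring
  field_simp
  rw [sq, sq, key, h]

/-- Let `L/K` be finite purely inseparable of odd characteristic `p`, `N/L`
separable algebraic, and `M = separableClosure K N` the maximal subfield of `N` separable over
`K`. Then `N = LM`, `N/M` is purely inseparable, `N/L` is Galois iff `M/K` is Galois, and `N`
is pythagorean iff `M` is pythagorean. -/
theorem stmt_10 (K L N : Type) [Field K] [Field L] [Field N]
    [Algebra K L] [Algebra L N] [Algebra K N] [IsScalarTower K L N]
    [FiniteDimensional K L] [IsPurelyInseparable K L]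
    [Algebra.IsSeparable L N]
    (p : ℕ) (hp : p.Prime) (hodd : p ≠ 2) [CharP K p] :
    ((IsScalarTower.toAlgHom K L N).fieldRange ⊔ separableClosure K N = ⊤) ∧
    IsPurelyInseparable (separableClosure K N) N ∧
    (IsGalois L N ↔ IsGalois K (separableClosure K N)) ∧
    ((∀ a : N, IsSumSq a → IsSquare a) ↔
      (∀ a : separableClosure K N, IsSumSq a → IsSquare a)) := by
  haveI : Algebra.IsAlgebraic K L := Algebra.IsAlgebraic.of_finite K L
  haveI : Algebra.IsAlgebraic L N := Algebra.IsSeparable.isAlgebraic L N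
  haveI : Algebra.IsAlgebraic K N := Algebra.IsAlgebraic.trans K L N
  set M := separableClosure K N with hM
  haveI hPI : IsPurelyInseparable M N := separableClosure.isPurelyInseparable K N
  haveI hchN : CharP N p := charP_of_injective_algebraMap (algebraMap K N).injective p
  haveI hchM : CharP M p := charP_of_injective_algebraMap (algebraMap K M).injective p
  haveI : ExpChar N p := ExpChar.prime hp
  haveI : ExpChar M p := ExpChar.prime hp
  -- Part 1
  have htop : IntermediateField.adjoin L (M : Set N) = ⊤ :=
    separableClosure.adjoin_eq_of_isAlgebraic_of_isSeparable (F := K) (E := L) (K := N)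
  have part1 : (IsScalarTower.toAlgHom K L N).fieldRange ⊔ M = ⊤ := by
    set L' := (IsScalarTower.toAlgHom K L N).fieldRange with hL'
    let i : L ≃ₐ[K] L' := AlgEquiv.ofInjectiveField (IsScalarTower.toAlgHom K L N)
    have hi : algebraMap L N = (algebraMap L' N) ∘ i := rfl
    have h1 : (IntermediateField.adjoin L (M : Set N)).restrictScalars K
        = (IntermediateField.adjoin L' (M : Set N)).restrictScalars K :=
      IntermediateField.restrictScalars_adjoin_of_algEquiv i hi _
    have h2 := IntermediateField.restrictScalars_adjoin_eq_sup (K := L') (S := (M : Set N))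
    rw [htop, IntermediateField.restrictScalars_top] at h1
    rw [IntermediateField.adjoin_self] at h2
    rw [← h2, ← h1]
  refine ⟨part1, hPI, ?_, ?_⟩
  · -- Galois iff
    constructor
    · intro hGal
      haveI : Normal L N := hGal.to_normal
      refine { to_isSeparable := separableClosure.isSeparable K N, to_normal := ?_ }
      refine { toIsAlgebraic := inferInstance, splits' := fun x => ?_ }
      have hsep : IsSeparable K (x : N) := mem_separableClosure_iff.1 x.2
      have h2 : (minpoly K (x : N)).map (algebraMap K L) = minpoly L (x : N) :=
        minpoly.map_eq_of_isSeparable_of_isPurelyInseparable L (x : N) hsep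
      have h3 : ((minpoly L (x : N)).map (algebraMap L N)).Splits := Normal.splits ‹Normal L N› _
      rw [← h2, Polynomial.map_map, ← IsScalarTower.algebraMap_eq] at h3
      have h4 : ((minpoly K (x : N)).map (algebraMap K M)).Splits := by
        refine IntermediateField.splits_of_splits h3 fun y hy => ?_
        rw [Polynomial.mem_rootSet] at hy
        refine mem_separableClosure_iff.2 (hsep.of_dvd (minpoly.dvd K y hy.2))
      rwa [← IntermediateField.minpoly_eq] at h4
    · intro hGal
      haveI : Normal K M := hGal.to_normal
      refine { to_isSeparable := ‹Algebra.IsSeparable L N›, to_normal := ?_ }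
      refine { toIsAlgebraic := inferInstance, splits' := fun x => ?_ }
      have hx : x ∈ IntermediateField.adjoin L (M : Set N) := htop ▸ trivial
      refine IntermediateField.splits_of_mem_adjoin (F := L) (K := N) (L := N) (S := (M : Set N)) (fun m hm => ?_) hx
      refine ⟨Algebra.IsIntegral.isIntegral m, ?_⟩
      have hsep : IsSeparable K m := mem_separableClosure_iff.1 hm
      have h2 : (minpoly K m).map (algebraMap K L) = minpoly L m :=
        minpoly.map_eq_of_isSeparable_of_isPurelyInseparable L m hsep
      have h3 : ((minpoly K (⟨m, hm⟩ : M)).map (algebraMap K M)).Splits :=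
        Normal.splits ‹Normal K M› _
      rw [IntermediateField.minpoly_eq] at h3
      have h4 : ((minpoly K m).map (algebraMap K N)).Splits := by
        have := h3.map (algebraMap M N)
        rwa [Polynomial.map_map, ← IsScalarTower.algebraMap_eq] at this
      rw [← h2, Polynomial.map_map, ← IsScalarTower.algebraMap_eq]
      exact h4
  · -- pythagorean iff
    have hoddpow : ∀ n : ℕ, Odd (p ^ n) := fun n => (hp.odd_of_ne_two hodd).pow
    constructor
    · intro hN a ha
      have hsum : IsSumSq ((algebraMap M N) a) := isSumSq_map (algebraMap M N) ha
      obtain ⟨c, hc⟩ := hN _ hsum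
      obtain ⟨n, y, hy⟩ := IsPurelyInseparable.pow_mem M p (E := N) c
      have key : a ^ p ^ n = y * y := by
        apply (algebraMap M N).injective
        rw [map_pow, map_mul, hc, mul_pow, hy]
      exact isSquare_of_odd_pow (hoddpow n) key
    · intro hMpy a ha
      have claim : ∃ (n : ℕ) (b : M), IsSumSq b ∧ (algebraMap M N) b = a ^ p ^ n := by
        induction ha with
        | zero =>
            exact ⟨0, 0, IsSumSq.zero, by simp⟩
        | @sq_add x s hs ih =>
            obtain ⟨n, b, hb, hbe⟩ := ih
            obtain ⟨m, y, hy⟩ := IsPurelyInseparable.pow_mem M p (E := N) x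
            refine ⟨max n m, y ^ p ^ (max n m - m) * (y ^ p ^ (max n m - m))
              + b ^ p ^ (max n m - n), IsSumSq.sq_add _
                (isSumSq_pow_expChar p hb _), ?_⟩
            have hxy : (algebraMap M N) (y ^ p ^ (max n m - m)) = x ^ p ^ (max n m) := by
              rw [map_pow, hy, ← pow_mul, ← pow_add, Nat.add_sub_cancel' (le_max_right n m)]
            have hsb : (algebraMap M N) (b ^ p ^ (max n m - n)) = s ^ p ^ (max n m) := by
              rw [map_pow, hbe, ← pow_mul, ← pow_add, Nat.add_sub_cancel' (le_max_left n m)]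
            rw [RingHom.map_add, RingHom.map_mul, hxy, hsb, add_pow_expChar_pow, mul_pow]
      obtain ⟨n, b, hb, hbe⟩ := claim
      obtain ⟨d, hd⟩ := hMpy b hb
      have key : a ^ p ^ n = (algebraMap M N) d * (algebraMap M N) d := by
        rw [← map_mul, ← hd, hbe]
      exact isSquare_of_odd_pow (hoddpow n) key
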